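/- Let A be an algebra and T_λ a hereditary standard stable tube of rank r_λ ≥ 1 in the Auslander–Reiten quiver of A, with mouth τ-cycle (X_1,...,X_{r_λ}). Then the sequence (X_{r_λ−1}, X_{r_λ−2}, ..., X_1) is a stratifying system of size r_λ − 1, i.e., consecutive ordering gives Hom_A(X_i, X_j) = 0 for i < j (with the chosen ordering) and Ext^1_A(X_i, X_j) = 0 for 1 ≤ i ≤ j ≤ r_λ − 1. -/
import Mathlib


open CategoryTheory CategoryTheory.Limits

noncomputable section

/-- `Hom_A(M,N) = 0`. -/
def HomZero (R : Type) [Ring R] (M N : ModuleCat R) : Prop := ∀ f : M ⟶ N, f = 0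

/-- `Ext¹_A(M,N) = 0`, expressed by: every short exact sequence `0 → N → E → M → 0`
in `mod A` splits. -/
def Ext1Zero (R : Type) [Ring R] (M N : ModuleCat R) : Prop :=
  ∀ (S : CategoryTheory.ShortComplex (ModuleCat R)), S.ShortExact →
    (S.X₁ ≅ N) → (S.X₃ ≅ M) → Nonempty S.Splitting

/-- An indecomposable module: nonzero, and any direct sum decomposition is trivial. -/
def Indec (R : Type) [Ring R] (M : ModuleCat R) : Prop :=
  ¬ IsZero M ∧ ∀ N P : ModuleCat R, Nonempty (M ≅ N ⊞ P) → IsZero N ∨ IsZero P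

/-- A stratifying system of size `t`: a sequence `X₁, …, X_t` of indecomposable modules with
`Hom(X_j, X_i) = 0` for `j > i` and `Ext¹(X_j, X_i) = 0` for `j ≥ i`. -/
def IsStratSys (R : Type) [Ring R] {t : ℕ} (X : Fin t → ModuleCat R) : Prop :=
  (∀ i, Indec R (X i)) ∧
  (∀ i j : Fin t, i < j → HomZero R (X j) (X i)) ∧
  (∀ i j : Fin t, i ≤ j → Ext1Zero R (X j) (X i))

/-- The set of mouth indices in the cone of the module `E_i[m]` of a stable tube of rank `r`. -/
def coneSet (r : ℕ) (i : ZMod r) (m : ℕ) : Finset (ZMod r) :=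
  (Finset.range m).image fun s : ℕ => i + (s : ZMod r)

/-- A hereditary standard stable tube of rank `r` in `Γ(mod R)`: the modules `E j m = E_j[m]`
(of regular length `m ≥ 1` on the ray starting at the mouth module `E_j = E_j[1]`), where
the mouth modules form a `τ`-cycle `τ E_j = E_{j-1}` of pairwise orthogonal bricks, all
modules of the tube have projective and injective dimension at most `1` (in particular they
are neither projective nor injective), and standardness gives the Auslander–Reiten formula
`Ext¹(E_i[m], E_j[n]) = 0 ↔ Hom(E_j[n], τ(E_i[m])) = 0`, `τ(E_i[m]) = E_{i-1}[m]`, together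
with the cone criterion for vanishing of extensions between modules of the tube. -/
structure HerStableTube (R : Type) [Ring R] (r : ℕ) where
  E : ZMod r → ℕ → ModuleCat R
  indec : ∀ (j : ZMod r) (m : ℕ), 1 ≤ m → Indec R (E j m)
  not_proj : ∀ (j : ZMod r) (m : ℕ), 1 ≤ m → ¬ Projective (E j m)
  not_inj : ∀ (j : ZMod r) (m : ℕ), 1 ≤ m → ¬ Injective (E j m)
  mouth_orth : ∀ i j : ZMod r, i ≠ j → HomZero R (E i 1) (E j 1)
  mouth_brick : ∀ i : ZMod r, ¬ HomZero R (E i 1) (E i 1)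
  ar_formula : ∀ (i j : ZMod r) (m n : ℕ), 1 ≤ m → 1 ≤ n →
      (Ext1Zero R (E i m) (E j n) ↔ HomZero R (E j n) (E (i - 1) m))
  ext_cone : ∀ (i j : ZMod r) (m n : ℕ), 1 ≤ m → 1 ≤ n →
      Ext1Zero R (E i m) (E j n) → Ext1Zero R (E j n) (E i m) →
      Disjoint (coneSet r i m) (coneSet r (j - 1) n)

/-- An (indecomposable) module lies in the tube `T` when it is isomorphic to some `E_j[m]`,
`m ≥ 1`; equivalently, it lies in `add T`. -/
def HerStableTube.Mem {R : Type} [Ring R] {r : ℕ} (T : HerStableTube R r)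
    (M : ModuleCat R) : Prop :=
  ∃ (j : ZMod r) (m : ℕ), 1 ≤ m ∧ Nonempty (M ≅ T.E j m)

/-- Let `T_λ` be a hereditary standard stable tube of rank `r ≥ 1`, with
mouth `τ`-cycle `(X₁, …, X_r)`, `X_i = E_i[1]`, `τ X_i = X_{i-1}`. Then the sequence
`(X_{r-1}, X_{r-2}, …, X₁)` is a stratifying system of size `r - 1`. -/
theorem mouth_stratifying_system (R : Type) [Ring R] (r : ℕ) (hr : 1 ≤ r)
    (T : HerStableTube R r) :
    IsStratSys R (fun k : Fin (r - 1) => T.E (((r - 1 - (k : ℕ) : ℕ) : ZMod r)) 1) := by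
  haveI : NeZero r := ⟨by omega⟩
  have cast_inj : ∀ a b : ℕ, a < r → b < r → ((a : ZMod r) = b) → a = b := by
    intro a b ha hb h
    have := congrArg ZMod.val h
    rwa [ZMod.val_cast_of_lt ha, ZMod.val_cast_of_lt hb] at this
  refine ⟨fun i => T.indec _ 1 le_rfl, ?_, ?_⟩
  · intro i j hij
    apply T.mouth_orth
    intro h
    have hi : (i : ℕ) < r - 1 := i.2
    have hj : (j : ℕ) < r - 1 := j.2
    have := cast_inj _ _ (by omega) (by omega) h
    omega
  · intro i j hij
    rw [T.ar_formula _ _ 1 1 le_rfl le_rfl]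
    have hi : (i : ℕ) < r - 1 := i.2
    have hj : (j : ℕ) < r - 1 := j.2
    have hij' : (i : ℕ) ≤ (j : ℕ) := hij
    have hcast : ((r - 1 - (j : ℕ) : ℕ) : ZMod r) - 1 =
        ((r - 1 - (j : ℕ) - 1 : ℕ) : ZMod r) := by
      have h1 : (1 : ℕ) ≤ r - 1 - (j : ℕ) := by omega
      rw [Nat.cast_sub h1, Nat.cast_one]
    rw [hcast]
    apply T.mouth_orth
    intro h
    have := cast_inj _ _ (by omega) (by omega) h
    omega
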